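/- Let G be a finite group and x ∈ S with c_x, m_x, n_x defined as usual. Then n_{x c_x} ≤ m_x; and if n_{x c_x} = n_x then n_x = m_x = m_{x c_x}. -/

import Mathlib

set_option linter.unusedSectionVars false
set_option maxHeartbeats 800000

open Filter Topology

section Aux
open scoped Classical
variable {G : Type*} [Group G] [Fintype G]

lemma aux_mul_nonneg (f g : MonoidAlgebra ℝ G) (hf : ∀ a, 0 ≤ f.coeff a) (hg : ∀ a, 0 ≤ g.coeff a)
    (t : G) : 0 ≤ (f * g).coeff t := by
  simp only [MonoidAlgebra.coeff_mul, Finsupp.sum]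
  refine Finset.sum_nonneg fun a _ => Finset.sum_nonneg fun b _ => ?_
  split
  · exact mul_nonneg (hf a) (hg b)
  · exact le_rfl

lemma aux_le_mul (f g : MonoidAlgebra ℝ G) (hf : ∀ a, 0 ≤ f.coeff a) (hg : ∀ a, 0 ≤ g.coeff a)
    (a b : G) : f.coeff a * g.coeff b ≤ (f * g).coeff (a * b) := by
  simp only [MonoidAlgebra.coeff_mul, Finsupp.sum]
  by_cases ha : f.coeff a = 0
  · rw [ha, zero_mul]
    refine Finset.sum_nonneg fun p _ => Finset.sum_nonneg fun q _ => ?_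
    split
    · exact mul_nonneg (hf p) (hg q)
    · exact le_rfl
  by_cases hb : g.coeff b = 0
  · rw [hb, mul_zero]
    refine Finset.sum_nonneg fun p _ => Finset.sum_nonneg fun q _ => ?_
    split
    · exact mul_nonneg (hf p) (hg q)
    · exact le_rfl
  have h1 : f.coeff a * g.coeff b ≤ ∑ q ∈ g.coeff.support, if a * q = a * b then f.coeff a * g.coeff q else 0 := by
    have := Finset.single_le_sum (f := fun q => if a * q = a * b then f.coeff a * g.coeff q else 0)
      (fun q _ => by
        show (0:ℝ) ≤ if a * q = a * b then f.coeff a * g.coeff q else 0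
        by_cases hq : a * q = a * b
        · rw [if_pos hq]; exact mul_nonneg (hf a) (hg q)
        · rw [if_neg hq])
      (Finsupp.mem_support_iff.2 hb)
    simpa using this
  refine h1.trans ?_
  exact Finset.single_le_sum
    (f := fun p => ∑ q ∈ g.coeff.support, if p * q = a * b then f.coeff p * g.coeff q else 0)
    (fun p _ => Finset.sum_nonneg fun q _ => by
      split
      · exact mul_nonneg (hf p) (hg q)
      · exact le_rfl)
    (Finsupp.mem_support_iff.2 ha)

lemma aux_mul_ne (f g : MonoidAlgebra ℝ G) (hf : ∀ a, 0 ≤ f.coeff a) (hg : ∀ a, 0 ≤ g.coeff a)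
    (a b : G) (ha : f.coeff a ≠ 0) (hb : g.coeff b ≠ 0) : (f * g).coeff (a * b) ≠ 0 :=
  ((mul_pos ((hf a).lt_of_ne' ha) ((hg b).lt_of_ne' hb)).trans_le
    (aux_le_mul f g hf hg a b)).ne'

lemma aux_mul_supp (f g : MonoidAlgebra ℝ G) (t : G) (h : (f * g).coeff t ≠ 0) :
    ∃ a b : G, f.coeff a ≠ 0 ∧ g.coeff b ≠ 0 ∧ a * b = t := by
  simp only [MonoidAlgebra.coeff_mul, Finsupp.sum] at h
  obtain ⟨a, ha, h⟩ := Finset.exists_ne_zero_of_sum_ne_zero h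
  obtain ⟨b, hb, h⟩ := Finset.exists_ne_zero_of_sum_ne_zero h
  refine ⟨a, b, Finsupp.mem_support_iff.1 ha, Finsupp.mem_support_iff.1 hb, ?_⟩
  by_contra hab
  rw [if_neg hab] at h
  exact h rfl

lemma aux_pow_nonneg (f : MonoidAlgebra ℝ G) (hf : ∀ a, 0 ≤ f.coeff a) :
    ∀ (k : ℕ) (t : G), 0 ≤ (f ^ k).coeff t := by
  intro k
  induction k with
  | zero =>
    intro t
    rw [pow_zero, MonoidAlgebra.one_def]
    rw [MonoidAlgebra.coeff_single, Finsupp.single_apply]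
    split <;> norm_num
  | succ k ih =>
    intro t
    rw [pow_succ]
    exact aux_mul_nonneg _ _ ih hf t

end Aux

open scoped Classical in
/-- For `x` in the simplex of `R[G]`, with `n_x, G_x, c_x, m_x` as usual and the analogous
quantities `n_{xc_x}, G_{xc_x}, m_{xc_x}` for `x·c_x`: one has `n_{xc_x} ≤ m_x`, and if
`n_{xc_x} = n_x` then `n_x = m_x = m_{xc_x}`. -/
theorem stmt10 {G : Type*} [Group G] [Fintype G]
    (x : MonoidAlgebra ℝ G) (hx1 : ∑ g : G, x.coeff g = 1) (hx0 : ∀ g, 0 ≤ x.coeff g)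
    (n : ℕ) (hn : IsLeast {k : ℕ | 0 < k ∧ (x ^ k).coeff (1 : G) ≠ 0} n)
    (H : Subgroup G) (hH : H = Subgroup.closure ((x ^ n).coeff.support : Set G))
    (c : MonoidAlgebra ℝ G)
    (hc : c = (Nat.card H : ℝ)⁻¹ •
      ∑ g ∈ Finset.univ.filter (· ∈ H), MonoidAlgebra.single g (1 : ℝ))
    (m : ℕ) (hm : IsLeast {k : ℕ | 0 < k ∧ ((x ^ k).coeff.support : Set G) ⊆ (H : Set G)} m)
    (n' : ℕ) (hn' : IsLeast {k : ℕ | 0 < k ∧ ((x * c) ^ k).coeff (1 : G) ≠ 0} n')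
    (H' : Subgroup G) (hH' : H' = Subgroup.closure (((x * c) ^ n').coeff.support : Set G))
    (m' : ℕ)
    (hm' : IsLeast {k : ℕ | 0 < k ∧ (((x * c) ^ k).coeff.support : Set G) ⊆ (H' : Set G)} m') :
    n' ≤ m ∧ (n' = n → n = m ∧ m = m') := by
  -- facts about c
  have hcard : (0:ℝ) < (Nat.card H : ℝ) := by exact_mod_cast Nat.card_pos
  have hη : 0 < (Nat.card H : ℝ)⁻¹ := inv_pos.2 hcard
  have hcapp : ∀ g : G, c.coeff g = if g ∈ H then (Nat.card H : ℝ)⁻¹ else 0 := by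
    intro g
    rw [hc, MonoidAlgebra.coeff_smul, Finsupp.smul_apply, MonoidAlgebra.coeff_sum, Finset.sum_apply']
    simp only [MonoidAlgebra.coeff_single, Finsupp.single_apply]
    rw [Finset.sum_ite_eq' (Finset.univ.filter (· ∈ H)) g (fun _ => (1:ℝ))]
    simp only [Finset.mem_filter, Finset.mem_univ, true_and]
    split <;> simp
  have hcNN : ∀ g, 0 ≤ c.coeff g := by
    intro g; rw [hcapp]; split
    · exact hη.le
    · exact le_rfl
  have hcH : ∀ g : G, g ∈ H → c.coeff g ≠ 0 := by
    intro g hg; rw [hcapp, if_pos hg]; exact hη.ne'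
  have hcmem : ∀ g : G, c.coeff g ≠ 0 → g ∈ H := by
    intro g hg
    by_contra h
    rw [hcapp, if_neg h] at hg
    exact hg rfl
  have hxcNN : ∀ g, 0 ≤ (x*c).coeff g := aux_mul_nonneg x c hx0 hcNN
  -- iterated positivity of powers along a fixed element
  have powPos : ∀ (a : ℕ) (g : G), (x^a).coeff g ≠ 0 → ∀ k, (x^(a*k)).coeff (g^k) ≠ 0 := by
    intro a g hg k
    induction k with
    | zero => simp [MonoidAlgebra.one_def, Finsupp.single_apply]
    | succ k ih =>
      have h2 := aux_mul_ne (x^(a*k)) (x^a) (aux_pow_nonneg x hx0 _) (aux_pow_nonneg x hx0 _)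
        (g^k) g ih hg
      rw [← pow_add] at h2
      rw [Nat.mul_succ, pow_succ]
      exact h2
  have claim1 : ∀ (k : ℕ) (g : G), (x^k).coeff g ≠ 0 → ((x*c)^k).coeff g ≠ 0 := by
    intro k
    induction k with
    | zero => intro g hg; simpa using hg
    | succ k ih =>
      intro g hg
      rw [pow_succ'] at hg ⊢
      obtain ⟨a, b, ha, hb, rfl⟩ := aux_mul_supp x (x^k) g hg
      have hxa : (x*c).coeff a ≠ 0 := by
        have := aux_mul_ne x c hx0 hcNN a 1 ha (hcH 1 H.one_mem)
        rwa [mul_one] at this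
      exact aux_mul_ne (x*c) ((x*c)^k) hxcNN (aux_pow_nonneg _ hxcNN k) a b hxa (ih b hb)
  have claim2 : ∀ (k : ℕ) (g h : G), ((x*c)^(k+1)).coeff g ≠ 0 → h ∈ H → ((x*c)^(k+1)).coeff (g*h) ≠ 0 := by
    intro k g h hg hh
    have hrw : (x*c)^(k+1) = ((x*c)^k * x) * c := by
      rw [pow_succ, ← mul_assoc]
    rw [hrw] at hg ⊢
    have hFNN : ∀ t, 0 ≤ ((x*c)^k * x).coeff t :=
      aux_mul_nonneg _ _ (aux_pow_nonneg _ hxcNN k) hx0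
    obtain ⟨a, q, ha, hq, rfl⟩ := aux_mul_supp _ c _ hg
    rw [mul_assoc a q h]
    exact aux_mul_ne _ c hFNN hcNN a (q*h) ha (hcH _ (H.mul_mem (hcmem q hq) hh))
  -- every element of H is in the support of some x^(n*t)
  have hHK : ∀ g : G, g ∈ H → ∃ t : ℕ, (x^(n*t)).coeff g ≠ 0 := by
    let K : Subgroup G :=
      { carrier := {g : G | ∃ t : ℕ, (x^(n*t)).coeff g ≠ 0}
        one_mem' := ⟨0, by simp [MonoidAlgebra.one_def]⟩
        mul_mem' := by
          rintro a b ⟨t, ht⟩ ⟨u, hu⟩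
          refine ⟨t + u, ?_⟩
          have := aux_mul_ne (x^(n*t)) (x^(n*u)) (aux_pow_nonneg _ hx0 _)
            (aux_pow_nonneg _ hx0 _) a b ht hu
          rwa [← pow_add, ← Nat.mul_add] at this
        inv_mem' := by
          rintro g ⟨t, ht⟩
          have hd : 0 < orderOf g := orderOf_pos g
          have hinv : g⁻¹ = g ^ (orderOf g - 1) := by
            have h1 : g * g ^ (orderOf g - 1) = 1 := by
              rw [← pow_succ', Nat.sub_add_cancel hd]
              exact pow_orderOf_eq_one g
            exact inv_eq_of_mul_eq_one_right h1
          refine ⟨t * (orderOf g - 1), ?_⟩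
          rw [hinv, ← mul_assoc]
          exact powPos (n*t) g ht (orderOf g - 1) }
    intro g hg
    have hle : H ≤ K := by
      rw [hH]
      refine (Subgroup.closure_le K).2 ?_
      intro a ha
      have ha' : (x^n).coeff a ≠ 0 := Finsupp.mem_support_iff.1 ha
      exact ⟨1, by rwa [Nat.mul_one]⟩
    exact hle hg
  have suppPow : ∀ (t : ℕ) (g : G), (x^(n*t)).coeff g ≠ 0 → g ∈ H := by
    intro t
    induction t with
    | zero =>
      intro g hg
      rw [Nat.mul_zero, pow_zero, MonoidAlgebra.one_def] at hg
      have h1 : (1:G) = g := by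
        by_contra hne
        rw [MonoidAlgebra.coeff_single, Finsupp.single_apply, if_neg hne] at hg
        exact hg rfl
      exact h1 ▸ H.one_mem
    | succ t ih =>
      intro g hg
      rw [Nat.mul_succ, pow_add] at hg
      obtain ⟨a, b, ha, hb, rfl⟩ := aux_mul_supp _ _ _ hg
      have hbH : b ∈ H := by
        rw [hH]
        exact Subgroup.subset_closure (Finset.mem_coe.2 (Finsupp.mem_support_iff.2 hb))
      exact H.mul_mem (ih a ha) hbH
  have claimC : ∀ (k : ℕ) (g : G), ((x*c)^k).coeff g ≠ 0 → ∃ j : ℕ, j % n = k % n ∧ (x^j).coeff g ≠ 0 := by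
    intro k
    induction k with
    | zero => intro g hg; exact ⟨0, rfl, by simpa using hg⟩
    | succ k ih =>
      intro g hg
      rw [pow_succ'] at hg
      obtain ⟨a, b, ha, hb, rfl⟩ := aux_mul_supp _ _ _ hg
      obtain ⟨p, q, hp, hq, rfl⟩ := aux_mul_supp _ _ _ ha
      obtain ⟨t, ht⟩ := hHK q (hcmem q hq)
      obtain ⟨j, hj, hxj⟩ := ih b hb
      refine ⟨1 + n*t + j, ?_, ?_⟩
      · have h1 : (1 + n*t + j) % n = (1 + j) % n := by
          have he : 1 + n*t + j = 1 + j + n*t := by ring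
          rw [he, Nat.add_mul_mod_self_left]
        rw [h1, Nat.add_comm k 1]
        exact Nat.ModEq.add (Nat.ModEq.refl 1) hj
      · have h2 := aux_mul_ne (x^(n*t)) (x^j) (aux_pow_nonneg _ hx0 _)
          (aux_pow_nonneg _ hx0 _) q b ht hxj
        rw [← pow_add] at h2
        have h3 := aux_mul_ne x (x^(n*t+j)) hx0 (aux_pow_nonneg _ hx0 _) p (q*b) hp h2
        have he : 1 + n*t + j = (n*t+j)+1 := by ring
        rw [he, pow_succ', mul_assoc]
        exact h3
  -- a support element of x
  obtain ⟨s, hs⟩ : ∃ g : G, x.coeff g ≠ 0 := by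
    by_contra h
    push_neg at h
    simp [h] at hx1
  have hxk : ∀ k : ℕ, (x^k).coeff (s^k) ≠ 0 := by
    intro k
    have h1 : (x^1).coeff s ≠ 0 := by rwa [pow_one]
    have := powPos 1 s h1 k
    rwa [Nat.one_mul] at this
  -- part 1 : if supp(x^k) ⊆ H then ((x*c)^k) 1 ≠ 0
  have part1 : ∀ k : ℕ, 0 < k → ((x^k).coeff.support : Set G) ⊆ (H : Set G) → ((x*c)^k).coeff 1 ≠ 0 := by
    intro k hk hsub
    have hsm : s^k ∈ H := hsub (Finset.mem_coe.2 (Finsupp.mem_support_iff.2 (hxk k)))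
    have h1 := claim1 k _ (hxk k)
    obtain ⟨k, rfl⟩ : ∃ j, k = j + 1 := ⟨k-1, (Nat.succ_pred_eq_of_pos hk).symm⟩
    have h2 := claim2 k _ _ h1 (H.inv_mem hsm)
    rwa [mul_inv_cancel] at h2
  have hn'_le_m : n' ≤ m := hn'.2 ⟨hm.1.1, part1 m hm.1.1 hm.1.2⟩
  have hm_le_n : m ≤ n := hm.2 ⟨hn.1.1, by rw [hH]; exact Subgroup.subset_closure⟩
  refine ⟨hn'_le_m, fun hnn => ?_⟩
  have hH'H : H' ≤ H := by
    rw [hH']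
    refine (Subgroup.closure_le H).2 ?_
    intro g hg
    have hg' : ((x*c)^n').coeff g ≠ 0 := Finsupp.mem_support_iff.1 hg
    rw [hnn] at hg'
    obtain ⟨j, hj, hxj⟩ := claimC n g hg'
    rw [Nat.mod_self] at hj
    obtain ⟨t, rfl⟩ := Nat.dvd_of_mod_eq_zero hj
    exact suppPow t g hxj
  have hm'_le_n' : m' ≤ n' := hm'.2 ⟨hn'.1.1, by rw [hH']; exact Subgroup.subset_closure⟩
  have hn'_le_m' : n' ≤ m' := by
    refine hn'.2 ⟨hm'.1.1, ?_⟩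
    have h1 := claim1 m' _ (hxk m')
    have hsm : s^m' ∈ H :=
      hH'H (hm'.1.2 (Finset.mem_coe.2 (Finsupp.mem_support_iff.2 h1)))
    obtain ⟨k, hk⟩ : ∃ j, m' = j + 1 := ⟨m'-1, (Nat.succ_pred_eq_of_pos hm'.1.1).symm⟩
    rw [hk] at h1 hsm
    have h2 := claim2 k _ _ h1 (H.inv_mem hsm)
    rw [mul_inv_cancel] at h2
    rwa [hk]
  exact ⟨by omega, by omega⟩
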